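/- Exchangeability of levels: for all positive integers a, b, c, every vector γ = (γ_1,…,γ_c) of nonnegative integers, and every permutation σ of {1,…,c}: #{π ∈ PP(a,b,c) : (c_1(π),…,c_c(π)) = (γ_1,…,γ_c)} = #{π ∈ PP(a,b,c) : (c_1(π),…,c_c(π)) = (γ_{σ(1)},…,γ_{σ(c)})}. In particular, under the uniform measure on PP(a,b,c), the random variables c_1(π),…,c_c(π) are exchangeable. -/

import Mathlib

open scoped BigOperators

/-- A plane partition: a matrix of naturals (0-indexed) with weakly decreasing rows and
columns and finitely many nonzero entries. -/
structure PlanePartition where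
  entry : ℕ → ℕ → ℕ
  row_decr : ∀ i j, entry i (j + 1) ≤ entry i j
  col_decr : ∀ i j, entry (i + 1) j ≤ entry i j
  finite_support : {p : ℕ × ℕ | entry p.1 p.2 ≠ 0}.Finite

namespace PlanePartition

/-- `π` has at most `b` (nonzero) rows. -/
def rowsLE (π : PlanePartition) (b : ℕ) : Prop := ∀ i j, b ≤ i → π.entry i j = 0

/-- `π` has at most `a` (nonzero) columns. -/
def colsLE (π : PlanePartition) (a : ℕ) : Prop := ∀ i j, a ≤ j → π.entry i j = 0

/-- all entries of `π` are at most `c`. -/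
def entriesLE (π : PlanePartition) (c : ℕ) : Prop := ∀ i j, π.entry i j ≤ c

/-- the number of columns of `π` containing the entry `ℓ`. -/
noncomputable def cCol (π : PlanePartition) (ℓ : ℕ) : ℕ :=
  {j | ∃ i, π.entry i j = ℓ}.ncard

/-- the length of the `i`-th row of `π` (0-indexed); this is the `(i+1)`-st part of
the shape of `π`. -/
noncomputable def rowLen (π : PlanePartition) (i : ℕ) : ℕ :=
  {j | 0 < π.entry i j}.ncard

/-- `d_{iℓ} = #{j : π_{ij} = ℓ > π_{i+1,j}}`; the row index `i` is 0-indexed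
while `ℓ` denotes the actual value. -/
noncomputable def phi (π : PlanePartition) (i ℓ : ℕ) : ℕ :=
  {j | π.entry i j = ℓ ∧ π.entry (i + 1) j < ℓ}.ncard

/-- `Φ(π)` as a 0-indexed matrix: entry `(i, l)` counts `j` with `π_{ij} = l+1 > π_{i+1,j}`. -/
noncomputable def phiMatrix (π : PlanePartition) : ℕ → ℕ → ℕ :=
  fun i l => π.phi i (l + 1)

/-- `π` has shape `μ`. -/
def hasShape (π : PlanePartition) (μ : YoungDiagram) : Prop :=
  ∀ i j, 0 < π.entry i j ↔ (i, j) ∈ μ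

/-- the descent set of `π` (0-indexed positions). -/
def des (π : PlanePartition) : Set (ℕ × ℕ) :=
  {p | π.entry (p.1 + 1) p.2 < π.entry p.1 p.2}

end PlanePartition

/-- the set of plane partitions with at most `a` columns, at most `b` rows
and entries at most `c`. -/
def PP (a b c : ℕ) : Set PlanePartition :=
  {π | π.colsLE a ∧ π.rowsLE b ∧ π.entriesLE c}

/-- `PP(∞, b, c)`: plane partitions with at most `b` rows and entries at most `c`. -/
def PPinf (b c : ℕ) : Set PlanePartition :=
  {π | π.rowsLE b ∧ π.entriesLE c}

/-- a monotone lattice path (as a list of points) from `s` to `t`. -/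
def IsMonPath (L : List (ℕ × ℕ)) (s t : ℕ × ℕ) : Prop :=
  L.head? = some s ∧ L.getLast? = some t ∧
    L.Chain' fun p q => q = (p.1 + 1, p.2) ∨ q = (p.1, p.2 + 1)

/-- the last passage time: the maximal weight of a monotone path from `s` to `t`
in the matrix `d`. -/
noncomputable def lastPassage (d : ℕ → ℕ → ℕ) (s t : ℕ × ℕ) : ℕ :=
  sSup {n | ∃ L, IsMonPath L s t ∧ n = (L.map fun p => d p.1 p.2).sum}

/-- `b×c` matrices of naturals (as functions vanishing off `[0,b) × [0,c)`) whose
last passage time `G(b,c)` is at most `a`. -/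
def BM (a b c : ℕ) : Set (ℕ → ℕ → ℕ) :=
  {d | (∀ i j, b ≤ i → d i j = 0) ∧ (∀ i j, c ≤ j → d i j = 0) ∧
    lastPassage d (0, 0) (b - 1, c - 1) ≤ a}

/-- the rectangular Young diagram of the partition `(a^b)` (with `b` rows of length `a`). -/
def rectDiagram (a b : ℕ) : YoungDiagram where
  cells := Finset.range b ×ˢ Finset.range a
  isLowerSet := by
    intro p q hle hp
    simp only [Finset.coe_product, Set.mem_prod, Finset.mem_coe, Finset.mem_range] at hp ⊢
    exact ⟨lt_of_le_of_lt hle.1 hp.1, lt_of_le_of_lt hle.2 hp.2⟩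

/-- the variables `(1^b, x_1, x_2, …)`: the first `b` variables are specialized to `1`. -/
def oneExtend (b : ℕ) (x : ℕ → ℝ) : ℕ → ℝ :=
  fun i => if i < b then 1 else x (i - b)

/-- the Schur polynomial `s_μ(x_1, …, x_N)` evaluated at real arguments;
variables are 0-indexed (`x ℓ` is the variable `x_{ℓ+1}`), as are tableau entries. -/
noncomputable def schur (μ : YoungDiagram) (N : ℕ) (x : ℕ → ℝ) : ℝ :=
  ∑ᶠ T ∈ {T : SemistandardYoungTableau μ | ∀ i j, (i, j) ∈ μ → T i j < N},
    ∏ p ∈ μ.cells, x (T p.1 p.2)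

/-- the dual symmetric Grothendieck polynomial `g_μ(x_1, …, x_n)` evaluated at real
arguments; variables are 0-indexed (`x ℓ` is the variable `x_{ℓ+1}`). -/
noncomputable def grothG (μ : YoungDiagram) (n : ℕ) (x : ℕ → ℝ) : ℝ :=
  ∑ᶠ π ∈ {π : PlanePartition | π.hasShape μ ∧ π.entriesLE n},
    ∏ ℓ ∈ Finset.range n, x ℓ ^ π.cCol (ℓ + 1)

/-- the elementary symmetric polynomial `e_m(x_1, …, x_n)` evaluated at real arguments. -/
noncomputable def esym (n : ℕ) (x : ℕ → ℝ) (m : ℕ) : ℝ :=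
  ∑ S ∈ (Finset.range n).powersetCard m, ∏ i ∈ S, x i

/-- `e_m` for an integer index `m`, with `e_m = 0` for `m < 0`. -/
noncomputable def esymZ (n : ℕ) (x : ℕ → ℝ) (m : ℤ) : ℝ :=
  if 0 ≤ m then esym n x m.toNat else 0

/-- the weight `∏_{(i,j) ∈ Des(π)} q_{π_{ij}}`; the parameters are 0-indexed
(`q ℓ` is the parameter `q_{ℓ+1}`). -/
noncomputable def desWeight (π : PlanePartition) (q : ℕ → ℝ) : ℝ :=
  ∏ᶠ p ∈ π.des, q (π.entry p.1 p.2 - 1)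

/-- the probability of a configuration `w` of a `b×c` matrix of i.i.d. Geom(q) entries,
where `P(entry = k) = (1-q) qᵏ`. -/
noncomputable def geomWeight (q : ℝ) (b c : ℕ) (w : Fin b × Fin c → ℕ) : ℝ :=
  ∏ p : Fin b × Fin c, ((1 - q) * q ^ w p)

/-- extend a `b×c` matrix to an `ℕ × ℕ`-indexed matrix by zero. -/
def matExt {b c : ℕ} (w : Fin b × Fin c → ℕ) : ℕ → ℕ → ℕ :=
  fun i j => if h : i < b ∧ j < c then w (⟨i, h.1⟩, ⟨j, h.2⟩) else 0




namespace CEx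

attribute [local instance 10] Classical.propDecidable

noncomputable section

abbrev R := MvPolynomial Bool ℤ

def XX : R := MvPolynomial.X false
def YY : R := MvPolynomial.X true

def sw : R →+* R := (MvPolynomial.rename (fun b : Bool => !b)).toRingHom

@[simp] lemma sw_X : sw XX = YY := by simp [sw, XX, YY]
@[simp] lemma sw_Y : sw YY = XX := by simp [sw, XX, YY]

/-- generating polynomial of bounded decreasing sequences, first entry capped. -/
def Cp : List (ℕ × ℕ) → ℕ → R
  | [], _ => 1
  | (u, w) :: L, cap =>
      ∑ v ∈ Finset.Icc w (min u cap),
        (if v < u then XX else 1) * (if w < v then YY else 1) * Cp L v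

def uH : List (ℕ × ℕ) → ℕ
  | [] => 0
  | (u, _) :: _ => u

def wH : List (ℕ × ℕ) → ℕ
  | [] => 0
  | (_, w) :: _ => w

def Pp (L : List (ℕ × ℕ)) : R := Cp L (uH L)

def Ep (L : List (ℕ × ℕ)) (v : ℕ) : R := Pp L - Cp L v

def Gp : List (ℕ × ℕ) → ℕ → R
  | [], _ => 0
  | (u, _) :: L, v =>
      (if v < u then Cp L u - XX * Gp L u else 0)
        - XX * YY * ∑ v' ∈ Finset.Ioo v u, Gp L v'

/-- both bound sequences weakly decreasing. -/
def Srt (L : List (ℕ × ℕ)) : Prop :=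
  List.Chain' (fun p q => q.1 ≤ p.1 ∧ q.2 ≤ p.2) L

lemma Cp_stable (L : List (ℕ × ℕ)) (v : ℕ) (h : uH L ≤ v) : Cp L v = Pp L := by
  cases L with
  | nil => rfl
  | cons p L =>
    obtain ⟨u, w⟩ := p
    have h' : uH ((u, w) :: L) = u := rfl
    rw [h'] at h
    show Cp ((u,w) :: L) v = Cp ((u,w) :: L) u
    simp only [Cp, min_eq_left h, Nat.min_self]

lemma Gp_zero (L : List (ℕ × ℕ)) (v : ℕ) (h : uH L ≤ v) : Gp L v = 0 := by
  cases L with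
  | nil => rfl
  | cons p L =>
    obtain ⟨u, w⟩ := p
    have h' : uH ((u, w) :: L) = u := rfl
    rw [h'] at h
    show (if v < u then Cp L u - XX * Gp L u else 0)
        - XX * YY * ∑ v' ∈ Finset.Ioo v u, Gp L v' = 0
    rw [if_neg (by omega), Finset.Ioo_eq_empty (by omega)]
    simp

lemma Ep_zero (L : List (ℕ × ℕ)) (v : ℕ) (h : uH L ≤ v) : Ep L v = 0 := by
  rw [Ep, Cp_stable L v h, sub_self]


lemma cp_cons (u w : ℕ) (L : List (ℕ × ℕ)) (cap : ℕ) :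
    Cp ((u, w) :: L) cap = ∑ v ∈ Finset.Icc w (min u cap),
      (if v < u then XX else 1) * (if w < v then YY else 1) * Cp L v := rfl

lemma pp_cons (u w : ℕ) (L : List (ℕ × ℕ)) :
    Pp ((u, w) :: L) = Cp ((u, w) :: L) u := rfl

lemma gp_cons (u w : ℕ) (L : List (ℕ × ℕ)) (v : ℕ) :
    Gp ((u, w) :: L) v = (if v < u then Cp L u - XX * Gp L u else 0)
        - XX * YY * ∑ v' ∈ Finset.Ioo v u, Gp L v' := rfl

theorem master : ∀ L : List (ℕ × ℕ), Srt L →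
    (sw (Pp L) = Pp L) ∧
    (∀ v, wH L ≤ v → sw (Ep L v) = Ep L v - (YY - XX) * Gp L v) ∧
    (∀ v, wH L ≤ v → Ep L v = YY * Gp L v
        + XX * YY * ∑ v' ∈ Finset.Ioo v (uH L), Gp L v') := by
  intro L
  induction L with
  | nil =>
    intro _
    refine ⟨by simp [Pp, Cp, uH], ?_, ?_⟩ <;> intro v hv <;>
      simp [Ep, Pp, Cp, Gp, uH]
  | cons p L ih =>
    obtain ⟨u, w⟩ := p
    intro hs
    have hsL : Srt L := hs.tail
    have hu1 : uH L ≤ u := by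
      cases L with
      | nil => exact Nat.zero_le u
      | cons q L' => exact (List.isChain_cons_cons.mp hs).1.1
    have hwL : wH L ≤ w := by
      cases L with
      | nil => exact Nat.zero_le w
      | cons q L' => exact (List.isChain_cons_cons.mp hs).1.2
    obtain ⟨ihP, ihD, ihE⟩ := ih hsL
    have f1 : Cp L u = Pp L := Cp_stable L u hu1
    have f2 : Gp L u = 0 := Gp_zero L u hu1
    have f3 : ∀ v', wH L ≤ v' → sw (Cp L v') = Cp L v' + (YY - XX) * Gp L v' := by
      intro v' h
      have hd := ihD v' h
      rw [Ep, map_sub, ihP] at hd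
      linear_combination -hd
    have ihE' : ∀ v, w ≤ v →
        Ep L v = YY * Gp L v + XX * YY * ∑ v' ∈ Finset.Ioo v u, Gp L v' := by
      intro v hv
      have hext : ∑ v' ∈ Finset.Ioo v (uH L), Gp L v'
          = ∑ v' ∈ Finset.Ioo v u, Gp L v' := by
        apply Finset.sum_subset (Finset.Ioo_subset_Ioo le_rfl hu1)
        intro x hx hnx
        apply Gp_zero
        simp only [Finset.mem_Ioo] at hx hnx
        omega
      rw [ihE v (le_trans hwL hv), hext]
    -- decomposition of the cons-level polynomials
    have e1 : ∀ v, w ≤ v → v < u →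
        Ep ((u, w) :: L) v = YY * Cp L u
          + XX * YY * ∑ v' ∈ Finset.Ioo v u, Cp L v' := by
      intro v hwv hvu
      have hsplit : Finset.Icc w u = Finset.Icc w v ∪ Finset.Ioc v u := by
        ext z
        simp only [Finset.mem_Icc, Finset.mem_union, Finset.mem_Ioc]
        omega
      have hdisj : Disjoint (Finset.Icc w v) (Finset.Ioc v u) := by
        rw [Finset.disjoint_left]
        intro z hz hz'
        simp only [Finset.mem_Icc] at hz
        simp only [Finset.mem_Ioc] at hz'
        omega
      have hP : Pp ((u, w) :: L) = Cp ((u, w) :: L) v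
          + ∑ v' ∈ Finset.Ioc v u,
              (if v' < u then XX else 1) * (if w < v' then YY else 1) * Cp L v' := by
        rw [pp_cons, cp_cons, cp_cons, Nat.min_self, min_eq_right hvu.le,
          hsplit, Finset.sum_union hdisj]
      have hIoc : Finset.Ioc v u = insert u (Finset.Ioo v u) := by
        ext z
        simp only [Finset.mem_Ioc, Finset.mem_insert, Finset.mem_Ioo]
        omega
      rw [Ep, hP, hIoc, Finset.sum_insert (by simp only [Finset.mem_Ioo]; omega)]
      rw [if_neg (lt_irrefl u), if_pos (lt_of_le_of_lt hwv hvu)]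
      have hcong : ∑ v' ∈ Finset.Ioo v u,
            (if v' < u then XX else 1) * (if w < v' then YY else 1) * Cp L v'
          = ∑ v' ∈ Finset.Ioo v u, XX * YY * Cp L v' := by
        apply Finset.sum_congr rfl
        intro z hz
        simp only [Finset.mem_Ioo] at hz
        rw [if_pos hz.2, if_pos (lt_of_le_of_lt hwv hz.1)]
      rw [hcong, ← Finset.mul_sum]
      ring
    have e2 : ∀ v, u ≤ v → Ep ((u, w) :: L) v = 0 := fun v hv => Ep_zero _ v hv
    have g2 : ∀ v, u ≤ v → Gp ((u, w) :: L) v = 0 := fun v hv => Gp_zero _ v hv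
    refine ⟨?_, ?_, ?_⟩
    · -- symmetry of Pp
      rcases lt_trichotomy u w with hc | hc | hc
      · have : Pp ((u, w) :: L) = 0 := by
          rw [pp_cons, cp_cons, Nat.min_self, Finset.Icc_eq_empty (by omega),
            Finset.sum_empty]
        rw [this, map_zero]
      · -- u = w : frozen column
        subst hc
        have : Pp ((u, u) :: L) = Cp L u := by
          rw [pp_cons, cp_cons, Nat.min_self, Finset.Icc_self,
            Finset.sum_singleton, if_neg (lt_irrefl u), if_neg (lt_irrefl u)]
          ring
        rw [this, f3 u hwL, f2]
        ring
      · -- w < u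
        have d1 : Pp ((u, w) :: L) = XX * Cp L w + YY * Cp L u
            + XX * YY * ∑ v ∈ Finset.Ioo w u, Cp L v := by
          have hIcc : Finset.Icc w u = insert w (insert u (Finset.Ioo w u)) := by
            ext z
            simp only [Finset.mem_Icc, Finset.mem_insert, Finset.mem_Ioo]
            omega
          rw [pp_cons, cp_cons, Nat.min_self, hIcc,
            Finset.sum_insert (by simp only [Finset.mem_insert, Finset.mem_Ioo]; omega),
            Finset.sum_insert (by simp only [Finset.mem_Ioo]; omega),
            if_pos hc, if_neg (lt_irrefl w), if_neg (lt_irrefl u), if_pos hc]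
          have hcong : ∑ v ∈ Finset.Ioo w u,
                (if v < u then XX else 1) * (if w < v then YY else 1) * Cp L v
              = ∑ v ∈ Finset.Ioo w u, XX * YY * Cp L v := by
            apply Finset.sum_congr rfl
            intro z hz
            simp only [Finset.mem_Ioo] at hz
            rw [if_pos hz.2, if_pos hz.1]
          rw [hcong, ← Finset.mul_sum]
          ring
        rw [d1]
        rw [map_add, map_add, map_mul, map_mul, map_mul, map_mul, sw_X, sw_Y,
          map_sum]
        have hswsum : ∑ v ∈ Finset.Ioo w u, sw (Cp L v)
            = (∑ v ∈ Finset.Ioo w u, Cp L v)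
              + (YY - XX) * ∑ v ∈ Finset.Ioo w u, Gp L v := by
          rw [Finset.mul_sum, ← Finset.sum_add_distrib]
          apply Finset.sum_congr rfl
          intro z hz
          simp only [Finset.mem_Ioo] at hz
          rw [f3 z (le_trans hwL hz.1.le)]
        rw [hswsum, f3 w hwL, f3 u (le_trans hwL hc.le), f2]
        have hEw := ihE' w le_rfl
        rw [Ep] at hEw
        have hCw : Cp L w = Pp L - YY * Gp L w
            - XX * YY * ∑ v' ∈ Finset.Ioo w u, Gp L v' := by
          linear_combination -hEw
        rw [hCw, f1]
        ring
    · -- claim (D)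
      intro v hv
      have hv' : w ≤ v := hv
      rcases le_or_gt u v with hc | hc
      · rw [e2 v hc, g2 v hc, map_zero]
        ring
      · rw [e1 v hv' hc, gp_cons, if_pos hc]
        rw [map_add, map_mul, map_mul, map_mul, sw_X, sw_Y, map_sum]
        have hswsum : ∑ v' ∈ Finset.Ioo v u, sw (Cp L v')
            = (∑ v' ∈ Finset.Ioo v u, Cp L v')
              + (YY - XX) * ∑ v' ∈ Finset.Ioo v u, Gp L v' := by
          rw [Finset.mul_sum, ← Finset.sum_add_distrib]
          apply Finset.sum_congr rfl
          intro z hz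
          simp only [Finset.mem_Ioo] at hz
          rw [f3 z (le_trans hwL (le_trans hv' hz.1.le))]
        rw [hswsum, f3 u (le_trans hwL (le_trans hv' hc.le)), f2]
        ring
    · -- claim (E)
      intro v hv
      have hv' : w ≤ v := hv
      rcases le_or_gt u v with hc | hc
      · rw [e2 v hc, g2 v hc]
        have huH : uH ((u, w) :: L) = u := rfl
        have : Finset.Ioo v (uH ((u, w) :: L)) = ∅ := by
          rw [huH]
          exact Finset.Ioo_eq_empty (by omega)
        rw [this, Finset.sum_empty]
        ring
      · rw [e1 v hv' hc]
        have huH : uH ((u, w) :: L) = u := rfl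
        rw [huH]
        -- rewrite the (cons-level) G's
        have hGW : Gp ((u, w) :: L) v = Cp L u - XX * Gp L u
            - XX * YY * ∑ v' ∈ Finset.Ioo v u, Gp L v' := by
          rw [gp_cons, if_pos hc]
        have hGmid : ∀ z ∈ Finset.Ioo v u, Gp ((u, w) :: L) z
            = Pp L - XX * YY * ∑ v' ∈ Finset.Ioo z u, Gp L v' := by
          intro z hz
          simp only [Finset.mem_Ioo] at hz
          rw [gp_cons, if_pos hz.2, f1, f2]
          ring
        have hCmid : ∀ z ∈ Finset.Ioo v u, Cp L z
            = Pp L - YY * Gp L z - XX * YY * ∑ v' ∈ Finset.Ioo z u, Gp L v' := by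
          intro z hz
          simp only [Finset.mem_Ioo] at hz
          have hEz := ihE' z (le_trans hv' hz.1.le)
          rw [Ep] at hEz
          linear_combination -hEz
        rw [hGW, f1, f2, Finset.sum_congr rfl hGmid, Finset.sum_congr rfl hCmid]
        rw [Finset.sum_sub_distrib, Finset.sum_sub_distrib, Finset.sum_sub_distrib,
          Finset.sum_const, ← Finset.mul_sum, ← Finset.mul_sum]
        ring


/-! ### Part 2: counting sequences -/

def Seqs : List (ℕ × ℕ) → ℕ → Finset (List ℕ)
  | [], _ => {[]}
  | p :: L, cap =>
      (Finset.Icc p.2 (min p.1 cap)).biUnion fun v => (Seqs L v).image (List.cons v)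

def sA : List (ℕ × ℕ) → List ℕ → ℕ
  | p :: L, v :: m => (if v < p.1 then 1 else 0) + sA L m
  | _, _ => 0

def sB : List (ℕ × ℕ) → List ℕ → ℕ
  | p :: L, v :: m => (if p.2 < v then 1 else 0) + sB L m
  | _, _ => 0

@[simp] lemma sA_cons (u w v : ℕ) (L : List (ℕ × ℕ)) (m : List ℕ) :
    sA ((u, w) :: L) (v :: m) = (if v < u then 1 else 0) + sA L m := rfl

@[simp] lemma sB_cons (u w v : ℕ) (L : List (ℕ × ℕ)) (m : List ℕ) :
    sB ((u, w) :: L) (v :: m) = (if w < v then 1 else 0) + sB L m := rfl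

lemma cp_eq_sum : ∀ (L : List (ℕ × ℕ)) (cap : ℕ),
    Cp L cap = ∑ m ∈ Seqs L cap, XX ^ (sA L m) * YY ^ (sB L m) := by
  intro L
  induction L with
  | nil =>
    intro cap
    show (1 : R) = ∑ m ∈ ({[]} : Finset (List ℕ)), XX ^ (sA [] m) * YY ^ (sB [] m)
    simp [sA, sB]
  | cons p L ih =>
    obtain ⟨u, w⟩ := p
    intro cap
    rw [cp_cons]
    show _ = ∑ m ∈ (Finset.Icc w (min u cap)).biUnion
        (fun v => (Seqs L v).image (List.cons v)), XX ^ (sA ((u,w)::L) m) * YY ^ (sB ((u,w)::L) m)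
    rw [Finset.sum_biUnion]
    · apply Finset.sum_congr rfl
      intro v hv
      rw [Finset.sum_image (by intro x _ y _ hxy; exact (List.cons.injEq v x v y).mp hxy |>.2)]
      rw [ih v, Finset.mul_sum]
      apply Finset.sum_congr rfl
      intro m hm
      rw [sA_cons, sB_cons, pow_add, pow_add]
      have h1 : (if v < u then XX else 1) = XX ^ (if v < u then 1 else 0) := by
        by_cases hc : v < u <;> simp [hc]
      have h2 : (if w < v then YY else 1) = YY ^ (if w < v then 1 else 0) := by
        by_cases hc : w < v <;> simp [hc]
      rw [h1, h2]
      ring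
    · intro x hx y hy hxy
      simp only [Finset.coe_Icc, Set.mem_Icc] at hx hy
      apply Finset.disjoint_left.mpr
      intro z hzx hzy
      simp only [Finset.mem_image] at hzx hzy
      obtain ⟨mx, _, hmx⟩ := hzx
      obtain ⟨my, _, hmy⟩ := hzy
      exact hxy (by rw [← hmx] at hmy; exact ((List.cons.injEq _ _ _ _).mp hmy).1.symm)

def mono (s t : ℕ) : Bool →₀ ℕ := Finsupp.single false s + Finsupp.single true t

lemma mono_inj {a b s t : ℕ} (h : mono a b = mono s t) : a = s ∧ b = t := by
  constructor
  · have := DFunLike.congr_fun h false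
    simpa [mono, Finsupp.single_apply] using this
  · have := DFunLike.congr_fun h true
    simpa [mono, Finsupp.single_apply] using this

lemma coeff_sum_card (S : Finset (List ℕ)) (f g : List ℕ → ℕ) (s t : ℕ) :
    MvPolynomial.coeff (mono s t) (∑ m ∈ S, XX ^ f m * YY ^ g m)
      = ((S.filter fun m => f m = s ∧ g m = t)).card := by
  classical
  rw [MvPolynomial.coeff_sum]
  have hterm : ∀ m, MvPolynomial.coeff (mono s t) (XX ^ f m * YY ^ g m)
      = if f m = s ∧ g m = t then (1 : ℤ) else 0 := by
    intro m
    rw [XX, YY, MvPolynomial.X_pow_eq_monomial, MvPolynomial.X_pow_eq_monomial,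
      MvPolynomial.monomial_mul, MvPolynomial.coeff_monomial]
    by_cases hc : f m = s ∧ g m = t
    · rw [if_pos hc, if_pos]
      · norm_num
      · show mono (f m) (g m) = mono s t
        rw [hc.1, hc.2]
    · rw [if_neg hc, if_neg]
      intro hmm
      exact hc (mono_inj hmm)
  rw [Finset.sum_congr rfl (fun m _ => hterm m), Finset.sum_boole]

lemma coeff_swap (p : R) (hp : sw p = p) (s t : ℕ) :
    MvPolynomial.coeff (mono s t) p = MvPolynomial.coeff (mono t s) p := by
  have hinj : Function.Injective (fun b : Bool => !b) := by
    intro x y h; cases x <;> cases y <;> simp_all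
  have h1 := MvPolynomial.coeff_rename_mapDomain (fun b : Bool => !b) hinj p (mono s t)
  have h2 : (MvPolynomial.rename (fun b : Bool => !b)) p = p := hp
  rw [h2] at h1
  have h3 : Finsupp.mapDomain (fun b : Bool => !b) (mono s t) = mono t s := by
    rw [mono, Finsupp.mapDomain_add, Finsupp.mapDomain_single, Finsupp.mapDomain_single]
    show Finsupp.single true s + Finsupp.single false t = _
    rw [mono, add_comm]
  rw [h3] at h1
  exact h1.symm

/-- The key local counting lemma: the number of bounded decreasing sequences with
statistics `(s,t)` is symmetric in `(s,t)`. -/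
theorem seqs_card_symm (L : List (ℕ × ℕ)) (h : Srt L) (s t : ℕ) :
    ((Seqs L (uH L)).filter fun m => sA L m = s ∧ sB L m = t).card
      = ((Seqs L (uH L)).filter fun m => sA L m = t ∧ sB L m = s).card := by
  have hP := (master L h).1
  have e1 := coeff_sum_card (Seqs L (uH L)) (sA L) (sB L) s t
  have e2 := coeff_sum_card (Seqs L (uH L)) (sA L) (sB L) t s
  rw [← cp_eq_sum] at e1 e2
  have : Cp L (uH L) = Pp L := rfl
  rw [this] at e1 e2
  have := coeff_swap (Pp L) hP s t
  rw [e1, e2] at this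
  exact_mod_cast this


/-! ### translation: sequences given by functions -/

lemma mem_seqs_map (F : ℕ → ℕ × ℕ) (f : ℕ → ℕ) : ∀ (n j cap : ℕ),
    ((List.range' j n).map f ∈ Seqs ((List.range' j n).map F) cap) ↔
      ((∀ k, j ≤ k → k < j + n →
         ((F k).2 ≤ f k ∧ f k ≤ (F k).1 ∧ (k + 1 < j + n → f (k + 1) ≤ f k))) ∧
       (0 < n → f j ≤ cap)) := by
  intro n
  induction n with
  | zero =>
    intro j cap
    simp only [List.range'_zero, List.map_nil]
    constructor
    · intro _
      exact ⟨fun k h1 h2 => by omega, fun h => by omega⟩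
    · intro _
      show ([] : List ℕ) ∈ ({[]} : Finset (List ℕ))
      exact Finset.mem_singleton_self _
  | succ n ih =>
    intro j cap
    rw [List.range'_succ, List.map_cons, List.map_cons]
    have hmem : (f j :: (List.range' (j+1) n).map f) ∈
        Seqs (F j :: (List.range' (j+1) n).map F) cap ↔
        ((F j).2 ≤ f j ∧ f j ≤ min (F j).1 cap ∧
          (List.range' (j+1) n).map f ∈ Seqs ((List.range' (j+1) n).map F) (f j)) := by
      show _ ∈ (Finset.Icc (F j).2 (min (F j).1 cap)).biUnion
          (fun v => (Seqs ((List.range' (j+1) n).map F) v).image (List.cons v)) ↔ _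
      rw [Finset.mem_biUnion]
      constructor
      · rintro ⟨v, hv, hmem⟩
        rw [Finset.mem_image] at hmem
        obtain ⟨m', hm', heq⟩ := hmem
        obtain ⟨h1, h2⟩ := (List.cons.injEq _ _ _ _).mp heq
        rw [Finset.mem_Icc] at hv
        rw [← h1, ← h2]
        exact ⟨hv.1, hv.2, hm'⟩
      · rintro ⟨h1, h2, h3⟩
        exact ⟨f j, Finset.mem_Icc.mpr ⟨h1, h2⟩, Finset.mem_image.mpr ⟨_, h3, rfl⟩⟩
    rw [hmem, ih (j+1) (f j)]
    constructor
    · rintro ⟨h1, h2, h3, h4⟩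
      refine ⟨?_, fun _ => le_trans h2 (min_le_right _ _)⟩
      intro k hk1 hk2
      rcases Nat.eq_or_lt_of_le hk1 with hk | hk
      · subst hk
        refine ⟨h1, le_trans h2 (min_le_left _ _), ?_⟩
        intro hkk
        exact h4 (by omega)
      · exact ⟨(h3 k hk (by omega)).1, (h3 k hk (by omega)).2.1,
          fun hkk => (h3 k hk (by omega)).2.2 (by omega)⟩
    · rintro ⟨h1, h2⟩
      have hj := h1 j le_rfl (by omega)
      refine ⟨hj.1, le_min hj.2.1 (h2 (by omega)), ?_, ?_⟩
      · intro k hk1 hk2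
        exact ⟨(h1 k (by omega) (by omega)).1, (h1 k (by omega) (by omega)).2.1,
          fun hkk => (h1 k (by omega) (by omega)).2.2 (by omega)⟩
      · intro hn
        exact hj.2.2 (by omega)

lemma sA_map (F : ℕ → ℕ × ℕ) (f : ℕ → ℕ) : ∀ (n j : ℕ),
    sA ((List.range' j n).map F) ((List.range' j n).map f)
      = ((Finset.Ico j (j + n)).filter fun k => f k < (F k).1).card := by
  intro n
  induction n with
  | zero =>
    intro j
    simp [sA]
  | succ n ih =>
    intro j
    rw [List.range'_succ, List.map_cons, List.map_cons]
    have hsA : sA (F j :: (List.range' (j+1) n).map F)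
        (f j :: (List.range' (j+1) n).map f)
        = (if f j < (F j).1 then 1 else 0)
          + sA ((List.range' (j+1) n).map F) ((List.range' (j+1) n).map f) := rfl
    have hIco : Finset.Ico j (j + (n + 1)) = insert j (Finset.Ico (j+1) (j+1+n)) := by
      ext z
      simp only [Finset.mem_Ico, Finset.mem_insert]
      omega
    rw [hsA, ih (j+1), hIco, Finset.filter_insert]
    by_cases hc : f j < (F j).1
    · rw [if_pos hc, if_pos hc, Finset.card_insert_of_notMem]
      · omega
      · intro hmm
        rw [Finset.mem_filter, Finset.mem_Ico] at hmm
        omega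
    · rw [if_neg hc, if_neg hc]
      omega

lemma sB_map (F : ℕ → ℕ × ℕ) (f : ℕ → ℕ) : ∀ (n j : ℕ),
    sB ((List.range' j n).map F) ((List.range' j n).map f)
      = ((Finset.Ico j (j + n)).filter fun k => (F k).2 < f k).card := by
  intro n
  induction n with
  | zero =>
    intro j
    simp [sB]
  | succ n ih =>
    intro j
    rw [List.range'_succ, List.map_cons, List.map_cons]
    have hsB : sB (F j :: (List.range' (j+1) n).map F)
        (f j :: (List.range' (j+1) n).map f)
        = (if (F j).2 < f j then 1 else 0)
          + sB ((List.range' (j+1) n).map F) ((List.range' (j+1) n).map f) := rfl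
    have hIco : Finset.Ico j (j + (n + 1)) = insert j (Finset.Ico (j+1) (j+1+n)) := by
      ext z
      simp only [Finset.mem_Ico, Finset.mem_insert]
      omega
    rw [hsB, ih (j+1), hIco, Finset.filter_insert]
    by_cases hc : (F j).2 < f j
    · rw [if_pos hc, if_pos hc, Finset.card_insert_of_notMem]
      · omega
      · intro hmm
        rw [Finset.mem_filter, Finset.mem_Ico] at hmm
        omega
    · rw [if_neg hc, if_neg hc]
      omega

lemma srt_map (F : ℕ → ℕ × ℕ) (n : ℕ)
    (h : ∀ k, k + 1 < n → (F (k + 1)).1 ≤ (F k).1 ∧ (F (k + 1)).2 ≤ (F k).2) :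
    Srt ((List.range' 0 n).map F) := by
  rw [Srt, List.Chain', List.isChain_iff_getElem]
  intro i hi
  simp only [List.length_map, List.length_range'] at hi
  simp only [List.getElem_map, List.getElem_range', Nat.one_mul, Nat.zero_add]
  exact ⟨(h i (by omega)).1, (h i (by omega)).2⟩

lemma uH_map (F : ℕ → ℕ × ℕ) (n : ℕ) (hn : 0 < n) :
    uH ((List.range' 0 n).map F) = (F 0).1 := by
  cases n with
  | zero => omega
  | succ n => rw [List.range'_succ, List.map_cons]; rfl

/-! ### Part 3: plane partitions and their layer heights -/

lemma pp_ext {π π' : PlanePartition} (h : π.entry = π'.entry) : π = π' := by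
  cases π; cases π'; simp_all

lemma entry_anti_col (π : PlanePartition) (j : ℕ) :
    Antitone fun i => π.entry i j :=
  antitone_nat_of_succ_le fun n => π.col_decr n j

lemma entry_anti_row (π : PlanePartition) (i : ℕ) :
    Antitone fun j => π.entry i j :=
  antitone_nat_of_succ_le fun n => π.row_decr i n

lemma mem_iff_lt_card (S : Finset ℕ) (hdc : ∀ i, i + 1 ∈ S → i ∈ S) (i : ℕ) :
    i ∈ S ↔ i < S.card := by
  have hdown : ∀ d i, i ∈ S → i - d ∈ S := by
    intro d
    induction d with
    | zero => intro i hi; simpa using hi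
    | succ d ih =>
      intro i hi
      have h1 := ih i hi
      rcases Nat.eq_zero_or_pos (i - d) with h0 | h0
      · rw [show i - (d + 1) = i - d by omega]
        exact h1
      · exact hdc _ (by rwa [show i - (d + 1) + 1 = i - d by omega])
  constructor
  · intro hi
    have hsub : Finset.range (i + 1) ⊆ S := by
      intro k hk
      rw [Finset.mem_range] at hk
      have := hdown (i - k) i hi
      rwa [show i - (i - k) = k by omega] at this
    have := Finset.card_le_card hsub
    rw [Finset.card_range] at this
    omega
  · intro hi
    by_contra hni
    have hsub : S ⊆ Finset.range i := by
      intro s hs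
      rw [Finset.mem_range]
      by_contra hsi
      exact hni (by
        have := hdown (s - i) s hs
        rwa [show s - (s - i) = i by omega] at this)
    have := Finset.card_le_card hsub
    rw [Finset.card_range] at this
    omega

/-- number of entries `≥ ℓ+1` in column `j` (the `ℓ`-th layer height). -/
def Hm (b : ℕ) (π : PlanePartition) (ℓ j : ℕ) : ℕ :=
  ((Finset.range b).filter fun i => ℓ + 1 ≤ π.entry i j).card

section heights

variable {a b c : ℕ} {π : PlanePartition}

lemma Hm_lt_iff (hπ : π ∈ PP a b c) (ℓ i j : ℕ) :
    i < Hm b π ℓ j ↔ ℓ + 1 ≤ π.entry i j := by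
  obtain ⟨hcols, hrows, hent⟩ := hπ
  have hdc : ∀ i, i + 1 ∈ (Finset.range b).filter (fun i => ℓ + 1 ≤ π.entry i j)
      → i ∈ (Finset.range b).filter (fun i => ℓ + 1 ≤ π.entry i j) := by
    intro i hi
    rw [Finset.mem_filter, Finset.mem_range] at hi ⊢
    exact ⟨by omega, le_trans hi.2 (π.col_decr i j)⟩
  have hiff := (mem_iff_lt_card _ hdc i).symm
  rw [Finset.mem_filter, Finset.mem_range] at hiff
  rw [Hm]
  constructor
  · intro h
    exact (hiff.mp h).2
  · intro h
    refine hiff.mpr ⟨?_, h⟩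
    by_contra hib
    rw [hrows i j (by omega)] at h
    omega

lemma Hm_le_b : Hm b π ℓ j ≤ b :=
  le_trans (Finset.card_filter_le _ _) (le_of_eq (Finset.card_range b))

lemma Hm_eq_zero_col (hπ : π ∈ PP a b c) (ℓ : ℕ) {j : ℕ} (hj : a ≤ j) :
    Hm b π ℓ j = 0 := by
  rw [Hm, Finset.card_eq_zero, Finset.filter_eq_empty_iff]
  intro i _
  rw [hπ.1 i j hj]
  omega

lemma Hm_eq_zero_lev (hπ : π ∈ PP a b c) {ℓ : ℕ} (hℓ : c ≤ ℓ) (j : ℕ) :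
    Hm b π ℓ j = 0 := by
  rw [Hm, Finset.card_eq_zero, Finset.filter_eq_empty_iff]
  intro i _
  have := hπ.2.2 i j
  omega

lemma Hm_anti_col (π : PlanePartition) (b ℓ j : ℕ) :
    Hm b π ℓ (j + 1) ≤ Hm b π ℓ j := by
  apply Finset.card_le_card
  intro i hi
  rw [Finset.mem_filter] at hi ⊢
  exact ⟨hi.1, le_trans hi.2 (π.row_decr i j)⟩

lemma Hm_anti_lev (π : PlanePartition) (b ℓ j : ℕ) :
    Hm b π (ℓ + 1) j ≤ Hm b π ℓ j := by
  apply Finset.card_le_card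
  intro i hi
  rw [Finset.mem_filter] at hi ⊢
  exact ⟨hi.1, by omega⟩

lemma entry_reconstruct (hπ : π ∈ PP a b c) (i j : ℕ) :
    π.entry i j = ((Finset.range c).filter fun ℓ => i < Hm b π ℓ j).card := by
  have hset : (Finset.range c).filter (fun ℓ => i < Hm b π ℓ j)
      = Finset.range (π.entry i j) := by
    ext ℓ
    rw [Finset.mem_filter, Finset.mem_range, Finset.mem_range, Hm_lt_iff hπ]
    have := hπ.2.2 i j
    omega
  rw [hset, Finset.card_range]

lemma cCol_eq_stat (hπ : π ∈ PP a b c) (ℓ : ℕ) :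
    π.cCol (ℓ + 1)
      = ((Finset.range a).filter fun j => Hm b π (ℓ + 1) j < Hm b π ℓ j).card := by
  have hset : {j | ∃ i, π.entry i j = ℓ + 1}
      = ↑((Finset.range a).filter fun j => Hm b π (ℓ + 1) j < Hm b π ℓ j) := by
    ext j
    simp only [Set.mem_setOf_eq, Finset.coe_filter, Finset.mem_range]
    constructor
    · rintro ⟨i, hi⟩
      have hja : j < a := by
        by_contra hja
        rw [hπ.1 i j (by omega)] at hi
        omega
      refine ⟨hja, ?_⟩
      have h1 : i < Hm b π ℓ j := (Hm_lt_iff hπ ℓ i j).mpr (by omega)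
      have h2 : ¬ i < Hm b π (ℓ + 1) j := by
        rw [Hm_lt_iff hπ (ℓ + 1) i j]
        omega
      omega
    · rintro ⟨hja, hlt⟩
      refine ⟨Hm b π (ℓ + 1) j, ?_⟩
      have h1 : ℓ + 1 ≤ π.entry (Hm b π (ℓ + 1) j) j :=
        (Hm_lt_iff hπ ℓ _ j).mp hlt
      have h2 : ¬ (ℓ + 1) + 1 ≤ π.entry (Hm b π (ℓ + 1) j) j := by
        rw [← Hm_lt_iff hπ (ℓ + 1) _ j]
        omega
      omega
  rw [PlanePartition.cCol, hset, Set.ncard_coe_finset]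

end heights

/-- rebuild a plane partition from a system of layer heights. -/
def build (c : ℕ) (G : ℕ → ℕ → ℕ)
    (hcol : ∀ ℓ j, G ℓ (j + 1) ≤ G ℓ j)
    (b : ℕ) (hb : ∀ ℓ j, G ℓ j ≤ b)
    (a : ℕ) (ha : ∀ ℓ j, a ≤ j → G ℓ j = 0) : PlanePartition where
  entry i j := ((Finset.range c).filter fun ℓ => i < G ℓ j).card
  row_decr := by
    intro i j
    apply Finset.card_le_card
    intro ℓ hℓ
    rw [Finset.mem_filter] at hℓ ⊢
    exact ⟨hℓ.1, lt_of_lt_of_le hℓ.2 (hcol ℓ j)⟩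
  col_decr := by
    intro i j
    apply Finset.card_le_card
    intro ℓ hℓ
    rw [Finset.mem_filter] at hℓ ⊢
    exact ⟨hℓ.1, by omega⟩
  finite_support := by
    apply Set.Finite.subset (Set.Finite.prod (Set.finite_Iio b) (Set.finite_Iio a))
    rintro ⟨i, j⟩ hp
    simp only [Set.mem_setOf_eq] at hp
    have hne : ((Finset.range c).filter fun ℓ => i < G ℓ j).Nonempty := by
      rw [Finset.nonempty_iff_ne_empty]
      intro hempty
      rw [hempty] at hp
      exact hp rfl
    obtain ⟨ℓ, hℓ⟩ := hne
    rw [Finset.mem_filter] at hℓ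
    constructor
    · exact lt_of_lt_of_le hℓ.2 (hb ℓ j)
    · show j < a
      by_contra hja
      rw [ha ℓ j (by omega)] at hℓ
      omega

section buildsec

variable {a b c : ℕ} {G : ℕ → ℕ → ℕ}
variable (hcol : ∀ ℓ j, G ℓ (j + 1) ≤ G ℓ j) (hbb : ∀ ℓ j, G ℓ j ≤ b)
variable (haa : ∀ ℓ j, a ≤ j → G ℓ j = 0)

lemma build_mem (hc0 : 0 < b) : build c G hcol b hbb a haa ∈ PP a b c := by
  refine ⟨?_, ?_, ?_⟩
  · intro i j hj
    show ((Finset.range c).filter fun ℓ => i < G ℓ j).card = 0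
    rw [Finset.card_eq_zero, Finset.filter_eq_empty_iff]
    intro ℓ _
    rw [haa ℓ j hj]
    omega
  · intro i j hi
    show ((Finset.range c).filter fun ℓ => i < G ℓ j).card = 0
    rw [Finset.card_eq_zero, Finset.filter_eq_empty_iff]
    intro ℓ _
    have := hbb ℓ j
    omega
  · intro i j
    show ((Finset.range c).filter fun ℓ => i < G ℓ j).card ≤ c
    exact le_trans (Finset.card_filter_le _ _) (le_of_eq (Finset.card_range c))

lemma build_Hm (hnest : ∀ ℓ j, G (ℓ + 1) j ≤ G ℓ j)
    (hlev : ∀ ℓ j, c ≤ ℓ → G ℓ j = 0) (ℓ j : ℕ) :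
    Hm b (build c G hcol b hbb a haa) ℓ j = G ℓ j := by
  have hentry : ∀ i, ℓ + 1 ≤ (build c G hcol b hbb a haa).entry i j ↔
      (ℓ < c ∧ i < G ℓ j) := by
    intro i
    have hdc : ∀ x, x + 1 ∈ (Finset.range c).filter (fun ℓ' => i < G ℓ' j)
        → x ∈ (Finset.range c).filter (fun ℓ' => i < G ℓ' j) := by
      intro x hx
      rw [Finset.mem_filter, Finset.mem_range] at hx ⊢
      exact ⟨by omega, lt_of_lt_of_le hx.2 (hnest x j)⟩
    have hiff := mem_iff_lt_card _ hdc ℓ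
    rw [Finset.mem_filter, Finset.mem_range] at hiff
    show ℓ + 1 ≤ ((Finset.range c).filter fun ℓ' => i < G ℓ' j).card ↔ _
    exact hiff.symm
  rcases le_or_gt c ℓ with hcl | hcl
  · rw [hlev ℓ j hcl]
    rw [Hm, Finset.card_eq_zero, Finset.filter_eq_empty_iff]
    intro i _
    rw [hentry i]
    omega
  · have hset : (Finset.range b).filter
        (fun i => ℓ + 1 ≤ (build c G hcol b hbb a haa).entry i j)
        = Finset.range (G ℓ j) := by
      ext i
      rw [Finset.mem_filter, Finset.mem_range, Finset.mem_range, hentry i]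
      have := hbb ℓ j
      omega
    rw [Hm, hset, Finset.card_range]

end buildsec

/-! ### helpers for the fibration -/

lemma seqs_length : ∀ (L : List (ℕ × ℕ)) (cap : ℕ) (m : List ℕ),
    m ∈ Seqs L cap → m.length = L.length := by
  intro L
  induction L with
  | nil =>
    intro cap m hm
    rw [show Seqs [] cap = {[]} from rfl, Finset.mem_singleton] at hm
    simp [hm]
  | cons p L ih =>
    intro cap m hm
    rw [show Seqs (p :: L) cap = (Finset.Icc p.2 (min p.1 cap)).biUnion
      (fun v => (Seqs L v).image (List.cons v)) from rfl, Finset.mem_biUnion] at hm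
    obtain ⟨v, _, hm⟩ := hm
    rw [Finset.mem_image] at hm
    obtain ⟨m', hm', rfl⟩ := hm
    simp [ih v m' hm']

lemma getD_map_range' (g : ℕ → ℕ) (n j : ℕ) :
    ((List.range' 0 n).map g).getD j 0 = if j < n then g j else 0 := by
  by_cases hj : j < n
  · rw [if_pos hj]
    rw [List.getD_eq_getElem _ _ (by simpa using hj)]
    simp
  · rw [if_neg hj, List.getD_eq_default]
    simpa using by omega

lemma eq_map_getD (m : List ℕ) (n : ℕ) (hlen : m.length = n) :
    m = (List.range' 0 n).map (fun j => m.getD j 0) := by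
  apply List.ext_getElem
  · simp [hlen]
  · intro i h1 h2
    simp only [List.getElem_map, List.getElem_range']
    rw [List.getD_eq_getElem _ _ (by omega)]
    congr 1
    omega

lemma pp_finite (a b c : ℕ) : (PP a b c).Finite := by
  apply Set.Finite.of_finite_image (f := fun π : PlanePartition =>
    fun p : Fin b × Fin a => (⟨min (π.entry p.1 p.2) c, by omega⟩ : Fin (c + 1)))
  · exact Set.toFinite _
  · intro π hπ π' hπ' heq
    apply pp_ext
    funext i j
    rcases lt_or_ge i b with hi | hi
    · rcases lt_or_ge j a with hj | hj
      · have h0 := congrFun heq (⟨i, hi⟩, ⟨j, hj⟩)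
        have hval : min (π.entry i j) c = min (π'.entry i j) c :=
          congrArg Fin.val h0
        have e1 : min (π.entry i j) c = π.entry i j := min_eq_left (hπ.2.2 i j)
        have e2 : min (π'.entry i j) c = π'.entry i j := min_eq_left (hπ'.2.2 i j)
        rw [e1, e2] at hval
        exact hval
      · rw [hπ.1 i j hj, hπ'.1 i j hj]
    · rw [hπ.2.1 i j hi, hπ'.2.1 i j hi]

def FRm (b K : ℕ) (π : PlanePartition) : ℕ → ℕ → ℕ :=
  fun ℓ j => if ℓ = K + 1 then 0 else Hm b π ℓ j

def Fof (b K : ℕ) (π0 : PlanePartition) : ℕ → ℕ × ℕ :=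
  fun j => (Hm b π0 K j, Hm b π0 (K + 2) j)

def Lof (a b K : ℕ) (π0 : PlanePartition) : List (ℕ × ℕ) :=
  (List.range' 0 a).map (Fof b K π0)

/-! ### Part 4: the fibration argument -/

section fiber

variable {a b c K : ℕ} {π0 : PlanePartition}

lemma seq_props (hπ0 : π0 ∈ PP a b c) (m : List ℕ)
    (hm : m ∈ Seqs (Lof a b K π0) (uH (Lof a b K π0))) :
    (∀ k, k < a → Hm b π0 (K + 2) k ≤ m.getD k 0 ∧ m.getD k 0 ≤ Hm b π0 K k) ∧
    (∀ k, k + 1 < a → m.getD (k + 1) 0 ≤ m.getD k 0) ∧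
    (∀ k, a ≤ k → m.getD k 0 = 0) ∧
    m = (List.range' 0 a).map (fun j => m.getD j 0) := by
  have hlen : m.length = a := by
    have := seqs_length _ _ _ hm
    rwa [Lof, List.length_map, List.length_range'] at this
  have hrepr : m = (List.range' 0 a).map (fun j => m.getD j 0) := eq_map_getD m a hlen
  have hzero : ∀ k, a ≤ k → m.getD k 0 = 0 := by
    intro k hk
    apply List.getD_eq_default
    omega
  rw [hrepr, Lof] at hm
  have hcond := (mem_seqs_map (Fof b K π0) (fun j => m.getD j 0) a 0 _).mp hm
  refine ⟨?_, ?_, hzero, hrepr⟩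
  · intro k hk
    have := hcond.1 k (by omega) (by omega)
    exact ⟨this.1, this.2.1⟩
  · intro k hk
    exact (hcond.1 k (by omega) (by omega)).2.2 (by omega)

/-- the rebuilt plane partition from a frame (given by `π0`) and a middle layer `m`. -/
def backOf (a c : ℕ) (b : ℕ) (K : ℕ) (π0 : PlanePartition) (hπ0 : π0 ∈ PP a b c)
    (m : List ℕ) (hm : m ∈ Seqs (Lof a b K π0) (uH (Lof a b K π0))) : PlanePartition :=
  build c (fun ℓ j => if ℓ = K + 1 then m.getD j 0 else Hm b π0 ℓ j)
    (by
      intro ℓ j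
      obtain ⟨hbd, hch, hz, _⟩ := seq_props hπ0 m hm
      by_cases hℓ : ℓ = K + 1
      · rw [if_pos hℓ, if_pos hℓ]
        rcases lt_or_ge (j + 1) a with hj | hj
        · exact hch j hj
        · rw [hz (j + 1) hj]; omega
      · rw [if_neg hℓ, if_neg hℓ]
        exact Hm_anti_col π0 b ℓ j)
    b
    (by
      intro ℓ j
      obtain ⟨hbd, hch, hz, _⟩ := seq_props hπ0 m hm
      by_cases hℓ : ℓ = K + 1
      · rw [if_pos hℓ]
        rcases lt_or_ge j a with hj | hj
        · exact le_trans (hbd j hj).2 Hm_le_b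
        · rw [hz j hj]; omega
      · rw [if_neg hℓ]
        exact Hm_le_b)
    a
    (by
      intro ℓ j hj
      obtain ⟨hbd, hch, hz, _⟩ := seq_props hπ0 m hm
      by_cases hℓ : ℓ = K + 1
      · rw [if_pos hℓ]; exact hz j hj
      · rw [if_neg hℓ]; exact Hm_eq_zero_col hπ0 ℓ hj)

lemma backOf_mem (hπ0 : π0 ∈ PP a b c) (hb : 0 < b) (m : List ℕ)
    (hm : m ∈ Seqs (Lof a b K π0) (uH (Lof a b K π0))) :
    backOf a c b K π0 hπ0 m hm ∈ PP a b c :=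
  build_mem _ _ _ hb

lemma backOf_Hm (hπ0 : π0 ∈ PP a b c) (hK : K + 1 < c) (m : List ℕ)
    (hm : m ∈ Seqs (Lof a b K π0) (uH (Lof a b K π0))) (ℓ j : ℕ) :
    Hm b (backOf a c b K π0 hπ0 m hm) ℓ j
      = if ℓ = K + 1 then m.getD j 0 else Hm b π0 ℓ j := by
  apply build_Hm
  · -- nestedness
    intro ℓ' j'
    obtain ⟨hbd, hch, hz, _⟩ := seq_props hπ0 m hm
    by_cases h1 : ℓ' + 1 = K + 1
    · have h2 : ℓ' ≠ K + 1 := by omega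
      rw [if_pos h1, if_neg h2]
      have hℓ'K : ℓ' = K := by omega
      subst hℓ'K
      rcases lt_or_ge j' a with hj | hj
      · exact (hbd j' hj).2
      · rw [hz j' hj]; omega
    · by_cases h2 : ℓ' = K + 1
      · rw [if_pos h2, if_neg h1]
        have : ℓ' + 1 = K + 2 := by omega
        rw [this]
        rcases lt_or_ge j' a with hj | hj
        · exact (hbd j' hj).1
        · rw [Hm_eq_zero_col hπ0 _ hj]; omega
      · rw [if_neg h1, if_neg h2]
        exact Hm_anti_lev π0 b ℓ' j'
  · -- vanishing above level c
    intro ℓ' j' hℓ'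
    rw [if_neg (by omega)]
    exact Hm_eq_zero_lev hπ0 (by omega) j'

end fiber

section fibercard

variable {a b c K : ℕ} {π0 : PlanePartition}

lemma hm_frm_eq {π : PlanePartition} (h : FRm b K π = FRm b K π0)
    {ℓ : ℕ} (hℓ : ℓ ≠ K + 1) (j : ℕ) : Hm b π ℓ j = Hm b π0 ℓ j := by
  have h0 := congrFun (congrFun h ℓ) j
  simp only [FRm, if_neg hℓ] at h0
  exact h0

lemma fiber_card (ha : 0 < a) (hb : 0 < b) (hK : K + 1 < c)
    (γ δ : Fin c → ℕ)
    (hπ0 : π0 ∈ PP a b c)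
    (hπ0s : ∀ l : Fin c, (l : ℕ) ≠ K → (l : ℕ) ≠ K + 1 → π0.cCol ((l : ℕ) + 1) = γ l)
    (hδ : ∀ l : Fin c, (l : ℕ) ≠ K → (l : ℕ) ≠ K + 1 → δ l = γ l)
    (S : Finset PlanePartition)
    (hS : ∀ π, π ∈ S ↔ (π ∈ PP a b c ∧ ∀ l : Fin c, π.cCol ((l : ℕ) + 1) = δ l)) :
    (S.filter fun π => FRm b K π = FRm b K π0).card
      = ((Seqs (Lof a b K π0) (uH (Lof a b K π0))).filter fun m =>
          sA (Lof a b K π0) m = δ ⟨K, by omega⟩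
            ∧ sB (Lof a b K π0) m = δ ⟨K + 1, hK⟩).card := by
  have hK2 : (K : ℕ) + 2 ≠ K + 1 := by omega
  have hKne : (K : ℕ) ≠ K + 1 := by omega
  -- the forward map and its properties
  have fwd_mem : ∀ π, π ∈ S.filter (fun π => FRm b K π = FRm b K π0) →
      ((List.range' 0 a).map fun j => Hm b π (K + 1) j) ∈
        (Seqs (Lof a b K π0) (uH (Lof a b K π0))).filter (fun m =>
          sA (Lof a b K π0) m = δ ⟨K, by omega⟩
            ∧ sB (Lof a b K π0) m = δ ⟨K + 1, hK⟩) := by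
    intro π hπf
    rw [Finset.mem_filter] at hπf
    obtain ⟨hπS, hFR⟩ := hπf
    obtain ⟨hπ, hstats⟩ := (hS π).mp hπS
    have heq : ∀ ℓ, ℓ ≠ K + 1 → ∀ j, Hm b π ℓ j = Hm b π0 ℓ j :=
      fun ℓ hℓ j => hm_frm_eq hFR hℓ j
    rw [Finset.mem_filter]
    refine ⟨?_, ?_, ?_⟩
    · rw [Lof]
      apply (mem_seqs_map (Fof b K π0) (fun j => Hm b π (K + 1) j) a 0 _).mpr
      constructor
      · intro k _ hk
        refine ⟨?_, ?_, ?_⟩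
        · show Hm b π0 (K + 2) k ≤ Hm b π (K + 1) k
          rw [← heq (K + 2) hK2 k]
          exact Hm_anti_lev π b (K + 1) k
        · show Hm b π (K + 1) k ≤ Hm b π0 K k
          rw [← heq K hKne k]
          exact Hm_anti_lev π b K k
        · intro _
          exact Hm_anti_col π b (K + 1) k
      · intro _
        rw [show uH ((List.range' 0 a).map (Fof b K π0)) = (Fof b K π0 0).1 from
          uH_map (Fof b K π0) a ha]
        show Hm b π (K + 1) 0 ≤ Hm b π0 K 0
        rw [← heq K hKne 0]
        exact Hm_anti_lev π b K 0
    · rw [Lof, sA_map]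
      have hset : (Finset.Ico 0 (0 + a)).filter
            (fun k => Hm b π (K + 1) k < (Fof b K π0 k).1)
          = (Finset.range a).filter
            (fun j => Hm b π (K + 1) j < Hm b π K j) := by
        rw [show (0 : ℕ) + a = a by omega, ← Finset.range_eq_Ico]
        apply Finset.filter_congr
        intro k _
        rw [show (Fof b K π0 k).1 = Hm b π0 K k from rfl, heq K hKne k]
      rw [hset, ← cCol_eq_stat hπ K]
      exact hstats ⟨K, by omega⟩
    · rw [Lof, sB_map]
      have hset : (Finset.Ico 0 (0 + a)).filter
            (fun k => (Fof b K π0 k).2 < Hm b π (K + 1) k)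
          = (Finset.range a).filter
            (fun j => Hm b π (K + 2) j < Hm b π (K + 1) j) := by
        rw [show (0 : ℕ) + a = a by omega, ← Finset.range_eq_Ico]
        apply Finset.filter_congr
        intro k _
        rw [show (Fof b K π0 k).2 = Hm b π0 (K + 2) k from rfl, heq (K + 2) hK2 k]
      rw [hset, ← cCol_eq_stat hπ (K + 1)]
      exact hstats ⟨K + 1, hK⟩
  -- the backward map and its properties
  have bwd_mem : ∀ (m : List ℕ)
      (hm : m ∈ Seqs (Lof a b K π0) (uH (Lof a b K π0)))
      (hmA : sA (Lof a b K π0) m = δ ⟨K, by omega⟩)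
      (hmB : sB (Lof a b K π0) m = δ ⟨K + 1, hK⟩),
      backOf a c b K π0 hπ0 m hm ∈ S.filter (fun π => FRm b K π = FRm b K π0) := by
    intro m hm hmA hmB
    obtain ⟨hbd, hch, hz, hrepr⟩ := seq_props hπ0 m hm
    have hmem := backOf_mem hπ0 hb m hm (K := K)
    have hHm := backOf_Hm hπ0 hK m hm
    rw [Finset.mem_filter]
    constructor
    · rw [hS]
      refine ⟨hmem, ?_⟩
      intro l
      rw [cCol_eq_stat hmem (l : ℕ)]
      by_cases h1 : (l : ℕ) = K
      · have hl : l = ⟨K, by omega⟩ := Fin.ext h1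
        rw [h1]
        have hset : (Finset.range a).filter (fun j =>
              Hm b (backOf a c b K π0 hπ0 m hm) ((K : ℕ) + 1) j
                < Hm b (backOf a c b K π0 hπ0 m hm) K j)
            = (Finset.Ico 0 (0 + a)).filter
              (fun k => m.getD k 0 < (Fof b K π0 k).1) := by
          rw [show (0 : ℕ) + a = a by omega, ← Finset.range_eq_Ico]
          apply Finset.filter_congr
          intro k _
          rw [hHm (K + 1) k, hHm K k, if_pos rfl, if_neg hKne,
            show (Fof b K π0 k).1 = Hm b π0 K k from rfl]
        rw [hset, ← sA_map (Fof b K π0) (fun j => m.getD j 0) a 0, ← Lof, ← hrepr, hl]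
        exact hmA
      · by_cases h2 : (l : ℕ) = K + 1
        · have hl : l = ⟨K + 1, hK⟩ := Fin.ext h2
          rw [h2]
          have hset : (Finset.range a).filter (fun j =>
                Hm b (backOf a c b K π0 hπ0 m hm) ((K + 1 : ℕ) + 1) j
                  < Hm b (backOf a c b K π0 hπ0 m hm) (K + 1) j)
              = (Finset.Ico 0 (0 + a)).filter
                (fun k => (Fof b K π0 k).2 < m.getD k 0) := by
            rw [show (0 : ℕ) + a = a by omega, ← Finset.range_eq_Ico]
            apply Finset.filter_congr
            intro k _
            rw [show (K + 1 : ℕ) + 1 = K + 2 by omega, hHm (K + 2) k, hHm (K + 1) k,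
              if_pos rfl, if_neg hK2,
              show (Fof b K π0 k).2 = Hm b π0 (K + 2) k from rfl]
          rw [hset, ← sB_map (Fof b K π0) (fun j => m.getD j 0) a 0, ← Lof, ← hrepr, hl]
          exact hmB
        · have hset : (Finset.range a).filter (fun j =>
                Hm b (backOf a c b K π0 hπ0 m hm) ((l : ℕ) + 1) j
                  < Hm b (backOf a c b K π0 hπ0 m hm) (l : ℕ) j)
              = (Finset.range a).filter
                (fun j => Hm b π0 ((l : ℕ) + 1) j < Hm b π0 (l : ℕ) j) := by
            apply Finset.filter_congr
            intro k _
            rw [hHm ((l : ℕ) + 1) k, hHm (l : ℕ) k, if_neg (by omega), if_neg h2]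
          rw [hset, ← cCol_eq_stat hπ0 (l : ℕ), hπ0s l h1 h2, hδ l h1 h2]
    · funext ℓ j
      show (if ℓ = K + 1 then 0 else Hm b (backOf a c b K π0 hπ0 m hm) ℓ j)
        = (if ℓ = K + 1 then 0 else Hm b π0 ℓ j)
      by_cases hℓ : ℓ = K + 1
      · rw [if_pos hℓ, if_pos hℓ]
      · rw [if_neg hℓ, if_neg hℓ, hHm ℓ j, if_neg hℓ]
  -- assemble the bijection
  refine Finset.card_bij'
    (fun π _ => (List.range' 0 a).map fun j => Hm b π (K + 1) j)
    (fun m hm => backOf a c b K π0 hπ0 m (Finset.mem_filter.mp hm).1) ?_ ?_ ?_ ?_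
  · exact fwd_mem
  · intro m hm
    have hm' := Finset.mem_filter.mp hm
    exact bwd_mem m hm'.1 hm'.2.1 hm'.2.2
  · -- left inverse : backOf (mid π) = π
    intro π hπf
    have hπf' := Finset.mem_filter.mp hπf
    obtain ⟨hπS, hFR⟩ := hπf'
    obtain ⟨hπ, _⟩ := (hS π).mp hπS
    apply pp_ext
    funext i j
    show ((Finset.range c).filter fun ℓ =>
        i < (if ℓ = K + 1
          then ((List.range' 0 a).map fun j' => Hm b π (K + 1) j').getD j 0
          else Hm b π0 ℓ j)).card = π.entry i j
    rw [entry_reconstruct hπ i j]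
    congr 1
    apply Finset.filter_congr
    intro ℓ _
    by_cases hℓ : ℓ = K + 1
    · rw [if_pos hℓ, hℓ, getD_map_range']
      rcases lt_or_ge j a with hj | hj
      · rw [if_pos hj]
      · rw [if_neg (by omega), Hm_eq_zero_col hπ _ hj]
    · rw [if_neg hℓ, hm_frm_eq hFR hℓ j]
  · -- right inverse : mid (backOf m) = m
    intro m hm
    obtain ⟨hbd, hch, hz, hrepr⟩ := seq_props hπ0 m (Finset.mem_filter.mp hm).1
    have hHm := backOf_Hm hπ0 hK m (Finset.mem_filter.mp hm).1
    show (List.range' 0 a).map (fun j =>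
      Hm b (backOf a c b K π0 hπ0 m (Finset.mem_filter.mp hm).1) (K + 1) j) = m
    have hfun : (fun j =>
        Hm b (backOf a c b K π0 hπ0 m (Finset.mem_filter.mp hm).1) (K + 1) j)
        = fun j => m.getD j 0 := by
      funext j
      rw [hHm (K + 1) j, if_pos rfl]
    rw [hfun, ← hrepr]

end fibercard

section adjacent

variable {a b c : ℕ}

lemma adjacent_swap (ha : 0 < a) (hb : 0 < b) (γ : Fin c → ℕ)
    (K : ℕ) (hK : K + 1 < c) :
    {π ∈ PP a b c | ∀ l : Fin c, π.cCol ((l : ℕ) + 1) = γ l}.ncard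
      = {π ∈ PP a b c | ∀ l : Fin c, π.cCol ((l : ℕ) + 1)
          = γ (Equiv.swap ⟨K, by omega⟩ ⟨K + 1, hK⟩ l)}.ncard := by
  set δ : Fin c → ℕ :=
    fun l => γ (Equiv.swap (⟨K, by omega⟩ : Fin c) ⟨K + 1, hK⟩ l) with hδdef
  have hδoff : ∀ l : Fin c, (l : ℕ) ≠ K → (l : ℕ) ≠ K + 1 → δ l = γ l := by
    intro l h1 h2
    rw [hδdef]
    show γ (Equiv.swap _ _ l) = γ l
    rw [Equiv.swap_apply_of_ne_of_ne
      (by intro h; rw [h] at h1; exact h1 rfl)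
      (by intro h; rw [h] at h2; exact h2 rfl)]
  have hδK : δ ⟨K, by omega⟩ = γ ⟨K + 1, hK⟩ := by
    rw [hδdef]; show γ (Equiv.swap _ _ _) = _; rw [Equiv.swap_apply_left]
  have hδK' : δ ⟨K + 1, hK⟩ = γ ⟨K, by omega⟩ := by
    rw [hδdef]; show γ (Equiv.swap _ _ _) = _; rw [Equiv.swap_apply_right]
  have hfin1 : {π ∈ PP a b c | ∀ l : Fin c, π.cCol ((l : ℕ) + 1) = γ l}.Finite :=
    (pp_finite a b c).subset (fun π hπ => hπ.1)
  have hfin2 : {π ∈ PP a b c | ∀ l : Fin c, π.cCol ((l : ℕ) + 1) = δ l}.Finite :=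
    (pp_finite a b c).subset (fun π hπ => hπ.1)
  rw [Set.ncard_eq_toFinset_card _ hfin1, Set.ncard_eq_toFinset_card _ hfin2]
  set A := hfin1.toFinset with hA
  set B := hfin2.toFinset with hB
  have hAmem : ∀ π, π ∈ A ↔ (π ∈ PP a b c ∧ ∀ l : Fin c, π.cCol ((l : ℕ) + 1) = γ l) := by
    intro π
    rw [hA, Set.Finite.mem_toFinset]
    exact Iff.rfl
  have hBmem : ∀ π, π ∈ B ↔ (π ∈ PP a b c ∧ ∀ l : Fin c, π.cCol ((l : ℕ) + 1) = δ l) := by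
    intro π
    rw [hB, Set.Finite.mem_toFinset]
    exact Iff.rfl
  set T := A.image (fun π => FRm b K π) ∪ B.image (fun π => FRm b K π) with hT
  have hcardA : A.card = ∑ fr ∈ T, (A.filter fun π => FRm b K π = fr).card :=
    Finset.card_eq_sum_card_fiberwise
      (fun π hπ => Finset.mem_union_left _ (Finset.mem_image_of_mem _ hπ))
  have hcardB : B.card = ∑ fr ∈ T, (B.filter fun π => FRm b K π = fr).card :=
    Finset.card_eq_sum_card_fiberwise
      (fun π hπ => Finset.mem_union_right _ (Finset.mem_image_of_mem _ hπ))
  rw [hcardA, hcardB]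
  apply Finset.sum_congr rfl
  intro fr hfr
  have hπ0ex : ∃ π0, π0 ∈ PP a b c ∧ FRm b K π0 = fr ∧
      (∀ l : Fin c, (l : ℕ) ≠ K → (l : ℕ) ≠ K + 1 → π0.cCol ((l : ℕ) + 1) = γ l) := by
    rcases Finset.mem_union.mp hfr with h | h
    · obtain ⟨π0, hπ0A, hfr0⟩ := Finset.mem_image.mp h
      obtain ⟨hπ0, hstats⟩ := (hAmem π0).mp hπ0A
      exact ⟨π0, hπ0, hfr0, fun l _ _ => hstats l⟩
    · obtain ⟨π0, hπ0B, hfr0⟩ := Finset.mem_image.mp h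
      obtain ⟨hπ0, hstats⟩ := (hBmem π0).mp hπ0B
      exact ⟨π0, hπ0, hfr0, fun l h1 h2 => by rw [hstats l, hδoff l h1 h2]⟩
  obtain ⟨π0, hπ0, hfr0, hπ0s⟩ := hπ0ex
  rw [← hfr0]
  have h1 := fiber_card ha hb hK γ γ hπ0 hπ0s (fun l _ _ => rfl) A hAmem
  have h2 := fiber_card ha hb hK γ δ hπ0 hπ0s hδoff B hBmem
  rw [h1, h2, hδK, hδK']
  have hsrt : Srt (Lof a b K π0) := by
    apply srt_map
    intro k _
    exact ⟨Hm_anti_col π0 b K k, Hm_anti_col π0 b (K + 2) k⟩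
  exact seqs_card_symm (Lof a b K π0) hsrt (γ ⟨K, by omega⟩) (γ ⟨K + 1, hK⟩)

/-- invariance of the refined count under any permutation of the levels. -/
lemma perm_invariant (ha : 0 < a) (hb : 0 < b) (σ : Equiv.Perm (Fin c)) :
    ∀ γ : Fin c → ℕ,
      {π ∈ PP a b c | ∀ l : Fin c, π.cCol ((l : ℕ) + 1) = γ (σ l)}.ncard
        = {π ∈ PP a b c | ∀ l : Fin c, π.cCol ((l : ℕ) + 1) = γ l}.ncard := by
  -- swaps of adjacent values
  have hadj : ∀ (x y : Fin c), (y : ℕ) = (x : ℕ) + 1 → ∀ γ : Fin c → ℕ,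
      {π ∈ PP a b c | ∀ l : Fin c, π.cCol ((l : ℕ) + 1) = γ (Equiv.swap x y l)}.ncard
        = {π ∈ PP a b c | ∀ l : Fin c, π.cCol ((l : ℕ) + 1) = γ l}.ncard := by
    intro x y hxy γ
    have hK : (x : ℕ) + 1 < c := by omega
    have hx : (⟨(x : ℕ), by omega⟩ : Fin c) = x := Fin.eta x _
    have hy : (⟨(x : ℕ) + 1, hK⟩ : Fin c) = y := Fin.ext (by show (x : ℕ) + 1 = (y : ℕ); omega)
    have := adjacent_swap ha hb γ (x : ℕ) hK
    rw [hx, hy] at this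
    exact this.symm
  -- arbitrary swaps, by induction on the distance
  have hswap : ∀ (d : ℕ) (x y : Fin c), (y : ℕ) = (x : ℕ) + d + 1 → ∀ γ : Fin c → ℕ,
      {π ∈ PP a b c | ∀ l : Fin c, π.cCol ((l : ℕ) + 1) = γ (Equiv.swap x y l)}.ncard
        = {π ∈ PP a b c | ∀ l : Fin c, π.cCol ((l : ℕ) + 1) = γ l}.ncard := by
    intro d
    induction d with
    | zero =>
      intro x y hxy γ
      exact hadj x y (by omega) γ
    | succ d ih =>
      intro x y hxy γ
      have hyc : (y : ℕ) < c := y.isLt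
      set z : Fin c := ⟨(y : ℕ) - 1, by omega⟩ with hz
      have hzy : (y : ℕ) = (z : ℕ) + 1 := by rw [hz]; simp; omega
      have hxz : (z : ℕ) = (x : ℕ) + d + 1 := by rw [hz]; simp; omega
      have hdecomp : Equiv.swap x y = Equiv.swap z y * Equiv.swap x z * Equiv.swap z y := by
        have hfx : (Equiv.swap z y) x = x := Equiv.swap_apply_of_ne_of_ne
          (by intro h; rw [h] at hxz; omega)
          (by intro h; rw [h] at hxy; omega)
        have hfz : (Equiv.swap z y) z = y := Equiv.swap_apply_left z y
        have := Equiv.swap_apply_apply (Equiv.swap z y) x z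
        rw [hfx, hfz] at this
        rw [this]
        have hinv : (Equiv.swap z y)⁻¹ = Equiv.swap z y := Equiv.swap_inv z y
        rw [hinv]
      rw [hdecomp]
      have hstep : ∀ (τ₁ τ₂ : Equiv.Perm (Fin c)),
          (∀ γ' : Fin c → ℕ,
            {π ∈ PP a b c | ∀ l : Fin c, π.cCol ((l : ℕ) + 1) = γ' (τ₁ l)}.ncard
              = {π ∈ PP a b c | ∀ l : Fin c, π.cCol ((l : ℕ) + 1) = γ' l}.ncard) →
          (∀ γ' : Fin c → ℕ,
            {π ∈ PP a b c | ∀ l : Fin c, π.cCol ((l : ℕ) + 1) = γ' (τ₂ l)}.ncard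
              = {π ∈ PP a b c | ∀ l : Fin c, π.cCol ((l : ℕ) + 1) = γ' l}.ncard) →
          ∀ γ' : Fin c → ℕ,
            {π ∈ PP a b c | ∀ l : Fin c, π.cCol ((l : ℕ) + 1) = γ' ((τ₁ * τ₂) l)}.ncard
              = {π ∈ PP a b c | ∀ l : Fin c, π.cCol ((l : ℕ) + 1) = γ' l}.ncard := by
        intro τ₁ τ₂ h₁ h₂ γ'
        have e : ∀ l : Fin c, γ' ((τ₁ * τ₂) l) = (fun l' => γ' (τ₁ l')) (τ₂ l) := by
          intro l; rfl
        calc {π ∈ PP a b c | ∀ l : Fin c, π.cCol ((l : ℕ) + 1) = γ' ((τ₁ * τ₂) l)}.ncard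
            = {π ∈ PP a b c | ∀ l : Fin c,
                π.cCol ((l : ℕ) + 1) = (fun l' => γ' (τ₁ l')) (τ₂ l)}.ncard := rfl
          _ = {π ∈ PP a b c | ∀ l : Fin c,
                π.cCol ((l : ℕ) + 1) = γ' (τ₁ l)}.ncard := h₂ (fun l' => γ' (τ₁ l'))
          _ = {π ∈ PP a b c | ∀ l : Fin c, π.cCol ((l : ℕ) + 1) = γ' l}.ncard := h₁ _
      exact hstep _ _
        (hstep _ _ (fun γ' => hadj z y hzy γ') (fun γ' => ih x z hxz γ'))
        (fun γ' => hadj z y hzy γ') γ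
  -- arbitrary swaps
  have hswap' : ∀ (x y : Fin c), x ≠ y → ∀ γ : Fin c → ℕ,
      {π ∈ PP a b c | ∀ l : Fin c, π.cCol ((l : ℕ) + 1) = γ (Equiv.swap x y l)}.ncard
        = {π ∈ PP a b c | ∀ l : Fin c, π.cCol ((l : ℕ) + 1) = γ l}.ncard := by
    intro x y hxy γ
    have hne : (x : ℕ) ≠ (y : ℕ) := fun h => hxy (Fin.ext h)
    rcases lt_or_gt_of_ne hne with h | h
    · exact hswap ((y : ℕ) - (x : ℕ) - 1) x y (by omega) γ
    · rw [Equiv.swap_comm]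
      exact hswap ((x : ℕ) - (y : ℕ) - 1) y x (by omega) γ
  -- all permutations by induction on swaps
  refine Equiv.Perm.swap_induction_on σ ?_ ?_
  · intro γ
    rfl
  · intro f x y hxy ih γ
    calc {π ∈ PP a b c | ∀ l : Fin c,
          π.cCol ((l : ℕ) + 1) = γ ((Equiv.swap x y * f) l)}.ncard
        = {π ∈ PP a b c | ∀ l : Fin c,
          π.cCol ((l : ℕ) + 1) = (fun l' => γ (Equiv.swap x y l')) (f l)}.ncard := rfl
      _ = {π ∈ PP a b c | ∀ l : Fin c,
          π.cCol ((l : ℕ) + 1) = γ (Equiv.swap x y l)}.ncard :=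
            ih (fun l' => γ (Equiv.swap x y l'))
      _ = {π ∈ PP a b c | ∀ l : Fin c, π.cCol ((l : ℕ) + 1) = γ l}.ncard :=
          hswap' x y hxy γ

end adjacent

end

end CEx

/-- Exchangeability of levels: for every `γ ∈ ℕ^c` and every permutation `σ`
of `{1,…,c}`, the number of `π ∈ PP(a,b,c)` with `(c_1(π),…,c_c(π)) = γ` equals the number
with `(c_1(π),…,c_c(π)) = γ ∘ σ`. -/
theorem corners_exchangeable (a b c : ℕ) (ha : 0 < a) (hb : 0 < b) (hc : 0 < c)
    (γ : Fin c → ℕ) (σ : Equiv.Perm (Fin c)) :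
    {π ∈ PP a b c | ∀ l : Fin c, π.cCol ((l : ℕ) + 1) = γ l}.ncard
      = {π ∈ PP a b c | ∀ l : Fin c, π.cCol ((l : ℕ) + 1) = γ (σ l)}.ncard := by
  exact (CEx.perm_invariant ha hb σ γ).symm
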